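/- Let (G, Ǧ₂, Ĝ₂, ε) be a multiplier bicomonad on a monoidal category C with induced natural transformation G₂^{X,Y} := Ǧ₂^{X,Y} ≫ G(ε_X ⊗ 1_Y) = Ĝ₂^{X,Y} ≫ G(1_X ⊗ ε_Y) : GX ⊗ GY ⟶ G(X ⊗ Y), and let (V, v̌, v̂) and (W, w̌, ŵ) be comodules over it. Then V ⊗ W is a comodule via x̌_Y := (1_V ⊗ w̌_Y) ≫ v̌_{W⊗Y} and x̂_X := (v̂_X ⊗ 1_W) ≫ ŵ_{X⊗V}; in particular the compatibility (1_{GX} ⊗ x̌_Y) ≫ G₂^{X, V⊗W⊗Y} = (x̂_X ⊗ 1_{GY}) ≫ G₂^{X⊗V⊗W, Y} holds for all objects X, Y. -/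

import Mathlib

open CategoryTheory Category MonoidalCategory

universe v u

variable {C : Type u} [Category.{v} C] [MonoidalCategory C]

set_option maxHeartbeats 3200000 in
/-- The monoidal product of two comodules over a multiplier bicomonad
`(G, Gc₂, Gh₂, ε)` is again a comodule, via
`xc_Y := (1_V ⊗ wc_Y) ≫ vc_{W⊗Y}` and `xh_X := (vh_X ⊗ 1_W) ≫ wh_{X⊗V}`;
in particular the compatibility condition between `xc` and `xh` holds. -/
theorem comodule_tensor_of_multiplierBicomonad
    (G : C ⥤ C)
    (Gc₂ : ∀ X Y : C, G.obj X ⊗ G.obj Y ⟶ G.obj (G.obj X ⊗ Y))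
    (Gh₂ : ∀ X Y : C, G.obj X ⊗ G.obj Y ⟶ G.obj (X ⊗ G.obj Y))
    (ε : ∀ X : C, G.obj X ⟶ X)
    -- naturality
    (hGcnat : ∀ {X X' Y Y' : C} (f : X ⟶ X') (g : Y ⟶ Y'),
      (G.map f ⊗ₘ G.map g) ≫ Gc₂ X' Y' = Gc₂ X Y ≫ G.map (G.map f ⊗ₘ g))
    (hGhnat : ∀ {X X' Y Y' : C} (f : X ⟶ X') (g : Y ⟶ Y'),
      (G.map f ⊗ₘ G.map g) ≫ Gh₂ X' Y' = Gh₂ X Y ≫ G.map (f ⊗ₘ G.map g))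
    (hεnat : ∀ {X Y : C} (f : X ⟶ Y), G.map f ≫ ε Y = ε X ≫ f)
    -- right multiplier bicomonad axioms for `Gc₂`
    (hGcassoc : ∀ X Y Z : C,
      (α_ (G.obj X) (G.obj Y) (G.obj Z)).hom ≫ (G.obj X ◁ Gc₂ Y Z) ≫
          Gc₂ X (G.obj Y ⊗ Z) ≫
          G.map ((α_ (G.obj X) (G.obj Y) Z).inv ≫ (Gc₂ X Y ▷ Z)) =
        (Gc₂ X Y ▷ G.obj Z) ≫ Gc₂ (G.obj X ⊗ Y) Z)
    (hGccou : ∀ X Y : C, Gc₂ X Y ≫ ε (G.obj X ⊗ Y) = G.obj X ◁ ε Y)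
    -- left multiplier bicomonad axioms for `Gh₂`
    (hGhassoc : ∀ X Y Z : C,
      (Gh₂ X Y ▷ G.obj Z) ≫ Gh₂ (X ⊗ G.obj Y) Z ≫
          G.map ((α_ X (G.obj Y) (G.obj Z)).hom ≫ (X ◁ Gh₂ Y Z)) =
        (α_ (G.obj X) (G.obj Y) (G.obj Z)).hom ≫ (G.obj X ◁ Gh₂ Y Z) ≫
          Gh₂ X (Y ⊗ G.obj Z))
    (hGhcou : ∀ X Y : C, Gh₂ X Y ≫ ε (X ⊗ G.obj Y) = ε X ▷ G.obj Y)
    -- the two induced semimonoidal structures coincide; call the common value `G₂`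
    (G₂ : ∀ X Y : C, G.obj X ⊗ G.obj Y ⟶ G.obj (X ⊗ Y))
    (hG₂check : ∀ X Y : C, G₂ X Y = Gc₂ X Y ≫ G.map (ε X ▷ Y))
    (hG₂hat : ∀ X Y : C, G₂ X Y = Gh₂ X Y ≫ G.map (X ◁ ε Y))
    -- the second compatibility condition of a multiplier bicomonad
    (hGcompat : ∀ X Y Z : C,
      (α_ (G.obj X) (G.obj Y) (G.obj Z)).hom ≫ (G.obj X ◁ Gc₂ Y Z) ≫
          G₂ X (G.obj Y ⊗ Z) =
        (Gh₂ X Y ▷ G.obj Z) ≫ G₂ (X ⊗ G.obj Y) Z ≫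
          G.map (α_ X (G.obj Y) Z).hom)
    -- a comodule `(V, vc, vh)`
    (V : C)
    (vc : ∀ Y : C, V ⊗ G.obj Y ⟶ G.obj (V ⊗ Y))
    (vh : ∀ X : C, G.obj X ⊗ V ⟶ G.obj (X ⊗ V))
    (hvcnat : ∀ {Y Y' : C} (g : Y ⟶ Y'),
      (V ◁ G.map g) ≫ vc Y' = vc Y ≫ G.map (V ◁ g))
    (hvhnat : ∀ {X X' : C} (f : X ⟶ X'),
      (G.map f ▷ V) ≫ vh X' = vh X ≫ G.map (f ▷ V))
    (hvc : ∀ Y Z : C,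
      (α_ V (G.obj Y) (G.obj Z)).hom ≫ (V ◁ Gc₂ Y Z) ≫ vc (G.obj Y ⊗ Z) ≫
          G.map ((α_ V (G.obj Y) Z).inv ≫ (vc Y ▷ Z)) =
        (vc Y ▷ G.obj Z) ≫ Gc₂ (V ⊗ Y) Z)
    (hvce : ∀ Y : C, vc Y ≫ ε (V ⊗ Y) = V ◁ ε Y)
    (hvh : ∀ X Y : C,
      (Gh₂ X Y ▷ V) ≫ vh (X ⊗ G.obj Y) ≫
          G.map ((α_ X (G.obj Y) V).hom ≫ (X ◁ vh Y)) =
        (α_ (G.obj X) (G.obj Y) V).hom ≫ (G.obj X ◁ vh Y) ≫ Gh₂ X (Y ⊗ V))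
    (hvhe : ∀ Y : C, vh Y ≫ ε (Y ⊗ V) = ε Y ▷ V)
    (hvcompat : ∀ X Y : C,
      (α_ (G.obj X) V (G.obj Y)).hom ≫ (G.obj X ◁ vc Y) ≫ G₂ X (V ⊗ Y) =
        (vh X ▷ G.obj Y) ≫ G₂ (X ⊗ V) Y ≫ G.map (α_ X V Y).hom)
    -- a comodule `(W, wc, wh)`
    (W : C)
    (wc : ∀ Y : C, W ⊗ G.obj Y ⟶ G.obj (W ⊗ Y))
    (wh : ∀ X : C, G.obj X ⊗ W ⟶ G.obj (X ⊗ W))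
    (hwcnat : ∀ {Y Y' : C} (g : Y ⟶ Y'),
      (W ◁ G.map g) ≫ wc Y' = wc Y ≫ G.map (W ◁ g))
    (hwhnat : ∀ {X X' : C} (f : X ⟶ X'),
      (G.map f ▷ W) ≫ wh X' = wh X ≫ G.map (f ▷ W))
    (hwc : ∀ Y Z : C,
      (α_ W (G.obj Y) (G.obj Z)).hom ≫ (W ◁ Gc₂ Y Z) ≫ wc (G.obj Y ⊗ Z) ≫
          G.map ((α_ W (G.obj Y) Z).inv ≫ (wc Y ▷ Z)) =
        (wc Y ▷ G.obj Z) ≫ Gc₂ (W ⊗ Y) Z)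
    (hwce : ∀ Y : C, wc Y ≫ ε (W ⊗ Y) = W ◁ ε Y)
    (hwh : ∀ X Y : C,
      (Gh₂ X Y ▷ W) ≫ wh (X ⊗ G.obj Y) ≫
          G.map ((α_ X (G.obj Y) W).hom ≫ (X ◁ wh Y)) =
        (α_ (G.obj X) (G.obj Y) W).hom ≫ (G.obj X ◁ wh Y) ≫ Gh₂ X (Y ⊗ W))
    (hwhe : ∀ Y : C, wh Y ≫ ε (Y ⊗ W) = ε Y ▷ W)
    (hwcompat : ∀ X Y : C,
      (α_ (G.obj X) W (G.obj Y)).hom ≫ (G.obj X ◁ wc Y) ≫ G₂ X (W ⊗ Y) =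
        (wh X ▷ G.obj Y) ≫ G₂ (X ⊗ W) Y ≫ G.map (α_ X W Y).hom)
    -- the candidate comodule structure on `V ⊗ W`
    (xc : ∀ Y : C, (V ⊗ W) ⊗ G.obj Y ⟶ G.obj ((V ⊗ W) ⊗ Y))
    (hxc : ∀ Y : C, xc Y =
      (α_ V W (G.obj Y)).hom ≫ (V ◁ wc Y) ≫ vc (W ⊗ Y) ≫ G.map (α_ V W Y).inv)
    (xh : ∀ X : C, G.obj X ⊗ (V ⊗ W) ⟶ G.obj (X ⊗ (V ⊗ W)))
    (hxh : ∀ X : C, xh X =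
      (α_ (G.obj X) V W).inv ≫ (vh X ▷ W) ≫ wh (X ⊗ V) ≫ G.map (α_ X V W).hom) :
    -- `(V ⊗ W, xc)` is a comodule over the right multiplier bicomonad
    (∀ Y Z : C,
      (α_ (V ⊗ W) (G.obj Y) (G.obj Z)).hom ≫ ((V ⊗ W) ◁ Gc₂ Y Z) ≫
          xc (G.obj Y ⊗ Z) ≫
          G.map ((α_ (V ⊗ W) (G.obj Y) Z).inv ≫ (xc Y ▷ Z)) =
        (xc Y ▷ G.obj Z) ≫ Gc₂ ((V ⊗ W) ⊗ Y) Z) ∧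
    (∀ Y : C, xc Y ≫ ε ((V ⊗ W) ⊗ Y) = (V ⊗ W) ◁ ε Y) ∧
    -- `(V ⊗ W, xh)` is a comodule over the left multiplier bicomonad
    (∀ X Y : C,
      (Gh₂ X Y ▷ (V ⊗ W)) ≫ xh (X ⊗ G.obj Y) ≫
          G.map ((α_ X (G.obj Y) (V ⊗ W)).hom ≫ (X ◁ xh Y)) =
        (α_ (G.obj X) (G.obj Y) (V ⊗ W)).hom ≫ (G.obj X ◁ xh Y) ≫
          Gh₂ X (Y ⊗ (V ⊗ W))) ∧
    (∀ Y : C, xh Y ≫ ε (Y ⊗ (V ⊗ W)) = ε Y ▷ (V ⊗ W)) ∧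
    -- in particular, the compatibility between `xc` and `xh` holds
    (∀ X Y : C,
      (α_ (G.obj X) (V ⊗ W) (G.obj Y)).hom ≫ (G.obj X ◁ xc Y) ≫
          G₂ X ((V ⊗ W) ⊗ Y) =
        (xh X ▷ G.obj Y) ≫ G₂ (X ⊗ (V ⊗ W)) Y ≫
          G.map (α_ X (V ⊗ W) Y).hom) := by
  -- one-sided naturality consequences
  have hGcL : ∀ {X X' : C} (f : X ⟶ X') (Z : C),
      (G.map f ▷ G.obj Z) ≫ Gc₂ X' Z = Gc₂ X Z ≫ G.map (G.map f ▷ Z) := by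
    intro X X' f Z; simpa using hGcnat f (𝟙 Z)
  have hGhR : ∀ (X : C) {Y Y' : C} (g : Y ⟶ Y'),
      (G.obj X ◁ G.map g) ≫ Gh₂ X Y' = Gh₂ X Y ≫ G.map (X ◁ G.map g) := by
    intro X Y Y' g; simpa using hGhnat (𝟙 X) g
  have hG₂nat : ∀ {X X' Y Y' : C} (f : X ⟶ X') (g : Y ⟶ Y'),
      (G.map f ⊗ₘ G.map g) ≫ G₂ X' Y' = G₂ X Y ≫ G.map (f ⊗ₘ g) := by
    intro X X' Y Y' f g
    rw [hG₂check, hG₂check, ← assoc, hGcnat]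
    simp only [assoc, ← G.map_comp]
    congr 2
    rw [← tensorHom_id, ← tensorHom_id, tensorHom_comp_tensorHom, tensorHom_comp_tensorHom, hεnat,
      comp_id, id_comp]
  have hG₂L : ∀ {X X' : C} (f : X ⟶ X') (Y : C),
      (G.map f ▷ G.obj Y) ≫ G₂ X' Y = G₂ X Y ≫ G.map (f ▷ Y) := by
    intro X X' f Y; simpa using hG₂nat f (𝟙 Y)
  have hG₂R : ∀ (X : C) {Y Y' : C} (g : Y ⟶ Y'),
      (G.obj X ◁ G.map g) ≫ G₂ X Y' = G₂ X Y ≫ G.map (X ◁ g) := by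
    intro X Y Y' g; simpa using hG₂nat (𝟙 X) g
  have hvh' : ∀ X Y : C,
      (G.obj X ◁ vh Y) ≫ Gh₂ X (Y ⊗ V) =
        (α_ (G.obj X) (G.obj Y) V).inv ≫ (Gh₂ X Y ▷ V) ≫ vh (X ⊗ G.obj Y) ≫
          G.map ((α_ X (G.obj Y) V).hom ≫ (X ◁ vh Y)) := by
    intro X Y; rw [← cancel_epi (α_ (G.obj X) (G.obj Y) V).hom,
      Iso.hom_inv_id_assoc, ← hvh]
  have hwh' : ∀ X Y : C,
      (G.obj X ◁ wh Y) ≫ Gh₂ X (Y ⊗ W) =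
        (α_ (G.obj X) (G.obj Y) W).inv ≫ (Gh₂ X Y ▷ W) ≫ wh (X ⊗ G.obj Y) ≫
          G.map ((α_ X (G.obj Y) W).hom ≫ (X ◁ wh Y)) := by
    intro X Y; rw [← cancel_epi (α_ (G.obj X) (G.obj Y) W).hom,
      Iso.hom_inv_id_assoc, ← hwh]
  have hvcompat' : ∀ X Y : C,
      (G.obj X ◁ vc Y) ≫ G₂ X (V ⊗ Y) =
        (α_ (G.obj X) V (G.obj Y)).inv ≫ (vh X ▷ G.obj Y) ≫ G₂ (X ⊗ V) Y ≫
          G.map (α_ X V Y).hom := by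
    intro X Y; rw [← cancel_epi (α_ (G.obj X) V (G.obj Y)).hom,
      Iso.hom_inv_id_assoc, ← hvcompat]
  have hwcompat' : ∀ X Y : C,
      (G.obj X ◁ wc Y) ≫ G₂ X (W ⊗ Y) =
        (α_ (G.obj X) W (G.obj Y)).inv ≫ (wh X ▷ G.obj Y) ≫ G₂ (X ⊗ W) Y ≫
          G.map (α_ X W Y).hom := by
    intro X Y; rw [← cancel_epi (α_ (G.obj X) W (G.obj Y)).hom,
      Iso.hom_inv_id_assoc, ← hwcompat]
  refine ⟨?_, ?_, ?_, ?_, ?_⟩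
  · -- right comodule coassociativity
    intro Y Z
    simp only [hxc]
    simp only [comp_whiskerRight, MonoidalCategory.whiskerLeft_comp, Functor.map_comp, assoc]
    slice_rhs 4 5 => rw [hGcL]
    slice_rhs 3 4 => rw [← hvc (W ⊗ Y) Z]
    slice_rhs 2 3 => rw [associator_naturality_middle]
    slice_rhs 3 4 => rw [← MonoidalCategory.whiskerLeft_comp, ← hwc Y Z]
    rw [MonoidalCategory.whiskerLeft_comp, MonoidalCategory.whiskerLeft_comp,
      MonoidalCategory.whiskerLeft_comp]
    simp only [assoc]
    slice_rhs 6 7 => rw [hvcnat]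
    have key :
        G.map (α_ V W (G.obj Y ⊗ Z)).inv ≫ G.map (α_ (V ⊗ W) (G.obj Y) Z).inv ≫
            G.map ((α_ V W (G.obj Y)).hom ▷ Z) ≫ G.map ((V ◁ wc Y) ▷ Z) ≫
            G.map (vc (W ⊗ Y) ▷ Z) ≫ G.map (G.map (α_ V W Y).inv ▷ Z) =
          G.map (V ◁ ((α_ W (G.obj Y) Z).inv ≫ wc Y ▷ Z)) ≫
            G.map ((α_ V (G.obj (W ⊗ Y)) Z).inv ≫ vc (W ⊗ Y) ▷ Z) ≫
            G.map (G.map (α_ V W Y).inv ▷ Z) := by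
      simp only [← G.map_comp]
      congr 1
      monoidal
    rw [key]
    monoidal
  · -- right comodule counit
    intro Y
    rw [hxc Y]
    slice_lhs 4 5 => rw [hεnat]
    slice_lhs 3 4 => rw [hvce]
    slice_lhs 2 3 => rw [← MonoidalCategory.whiskerLeft_comp, hwce]
    monoidal
  · -- left comodule coassociativity
    intro X Y
    simp only [hxh]
    simp only [comp_whiskerRight, MonoidalCategory.whiskerLeft_comp, Functor.map_comp, assoc]
    slice_rhs 5 6 => rw [hGhR]
    slice_rhs 4 5 => rw [hwh' X (Y ⊗ V)]
    slice_rhs 3 4 => rw [associator_inv_naturality_middle]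
    slice_rhs 4 5 => rw [← comp_whiskerRight, hvh' X Y]
    rw [comp_whiskerRight, comp_whiskerRight, comp_whiskerRight]
    simp only [assoc]
    slice_rhs 7 8 => rw [hwhnat]
    have key :
        G.map (α_ (X ⊗ G.obj Y) V W).hom ≫ G.map (α_ X (G.obj Y) (V ⊗ W)).hom ≫
            G.map (X ◁ (α_ (G.obj Y) V W).inv) ≫ G.map (X ◁ vh Y ▷ W) ≫
            G.map (X ◁ wh (Y ⊗ V)) ≫ G.map (X ◁ G.map (α_ Y V W).hom) =
          G.map (((α_ X (G.obj Y) V).hom ≫ X ◁ vh Y) ▷ W) ≫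
            G.map ((α_ X (G.obj (Y ⊗ V)) W).hom ≫ X ◁ wh (Y ⊗ V)) ≫
            G.map (X ◁ G.map (α_ Y V W).hom) := by
      simp only [← G.map_comp]
      congr 1
      monoidal
    rw [key]
    monoidal
  · -- left comodule counit
    intro X
    rw [hxh X]
    slice_lhs 4 5 => rw [hεnat]
    slice_lhs 3 4 => rw [hwhe]
    slice_lhs 2 3 => rw [← comp_whiskerRight, hvhe]
    monoidal
  · -- compatibility
    intro X Y
    simp only [hxc, hxh]
    simp only [comp_whiskerRight, MonoidalCategory.whiskerLeft_comp, Functor.map_comp, assoc]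
    slice_lhs 5 6 => rw [hG₂R]
    slice_lhs 4 5 => rw [hvcompat']
    slice_lhs 3 4 => rw [associator_inv_naturality_right]
    slice_lhs 4 5 => rw [whisker_exchange]
    slice_lhs 5 6 => rw [hwcompat' (X ⊗ V) Y]
    slice_rhs 4 5 => rw [hG₂L]
    have key :
        G.map (α_ (X ⊗ V) W Y).hom ≫ G.map (α_ X V (W ⊗ Y)).hom ≫
            G.map (X ◁ (α_ V W Y).inv) =
          G.map ((α_ X V W).hom ▷ Y) ≫ G.map (α_ X (V ⊗ W) Y).hom := by
      simp only [← G.map_comp]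
      congr 1
      monoidal
    simp only [assoc]
    rw [key]
    monoidal
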